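/- Let a be a positive integer and let s be minimal such that the open interval (s^2·a, s^2·(a+1)) contains a perfect square; then that perfect square is unique, i.e., τ_s(a) = 1 at s = σ(a). -/
import Mathlib


noncomputable def tauN (s a : ℕ) : ℕ := {t : ℕ | 0 < t ∧ s^2 * a < t^2 ∧ t^2 < s^2 * (a+1)}.ncard

/-- σ(a): least s > 0 such that some positive t satisfies s²a < t² < s²(a+1). -/
noncomputable def sigmaN (a : ℕ) : ℕ :=
  sInf {s : ℕ | 0 < s ∧ ∃ t : ℕ, 0 < t ∧ s^2 * a < t^2 ∧ t^2 < s^2 * (a+1)}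

lemma aux1' (S T K A : ℤ) (hS : 2 ≤ S) (hK : 1 ≤ K)
    (hT : S*K + 1 ≤ T) (h1 : S^2*A < T^2) : (S-1)^2*A < (T-K)^2 := by
  have hSK : 2 ≤ S*K := by nlinarith
  have hT0 : 3 ≤ T := by linarith
  have h2 : (S-1)*T + 1 ≤ S*(T-K) := by nlinarith
  have h0 : (0:ℤ) ≤ (S-1)*T := by nlinarith
  have h3 : ((S-1)*T + 1)^2 ≤ (S*(T-K))^2 := by nlinarith
  have h4 : (S-1)^2 * (S^2*A) < ((S-1)*T)^2 + 1 := by nlinarith [sq_nonneg (S-1)]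
  nlinarith [sq_nonneg (T-K), mul_pos (by nlinarith : (0:ℤ) < S) (by nlinarith : (0:ℤ) < S)]

lemma aux2' (S T K A : ℤ) (hS : 2 ≤ S) (hK : 1 ≤ K)
    (hKT : K ≤ T) (hT : T+1 < S*(K+1)) (h2 : (T+1)^2 < S^2*(A+1)) : (T-K)^2 < (S-1)^2*(A+1) := by
  have h1 : S*(T-K) + 1 ≤ (S-1)*(T+1) := by nlinarith
  have h0 : (0:ℤ) ≤ S*(T-K) := by nlinarith
  have h3 : (S*(T-K))^2 < ((S-1)*(T+1))^2 := by nlinarith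
  have h4 : ((S-1)*(T+1))^2 < (S-1)^2*(S^2*(A+1)) := by
    nlinarith [sq_nonneg (S-1), mul_pos (by nlinarith : (0:ℤ) < (S-1)^2)
      (by nlinarith : (0:ℤ) < S^2*(A+1) - (T+1)^2)]
  nlinarith [sq_nonneg (T-K), mul_pos (by nlinarith : (0:ℤ) < S) (by nlinarith : (0:ℤ) < S)]

theorem stmt_7 (a : ℕ) (ha : 0 < a) : tauN (sigmaN a) a = 1 := by
  set k := Nat.sqrt a with hkdef
  have hk1 : 1 ≤ k := Nat.sqrt_pos.mpr ha
  have hka : k^2 ≤ a := Nat.sqrt_le' a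
  have hka' : a < (k+1)^2 := Nat.lt_succ_sqrt' a
  -- nonemptiness of the defining set for sigmaN
  have hne : {s : ℕ | 0 < s ∧ ∃ t : ℕ, 0 < t ∧ s^2 * a < t^2 ∧ t^2 < s^2 * (a+1)}.Nonempty := by
    refine ⟨2*k+3, by omega, Nat.sqrt ((2*k+3)^2*a) + 1, by omega, ?_, ?_⟩
    · exact Nat.lt_succ_sqrt' ((2*k+3)^2*a)
    · have hm : Nat.sqrt ((2*k+3)^2*a) < (2*k+3)*(k+1) := by
        rw [Nat.sqrt_lt']
        calc (2*k+3)^2*a < (2*k+3)^2*(k+1)^2 := by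
              exact Nat.mul_lt_mul_of_le_of_lt (le_refl _) hka' (by positivity)
          _ = ((2*k+3)*(k+1))^2 := by ring
      have hsq : (Nat.sqrt ((2*k+3)^2*a))^2 ≤ (2*k+3)^2*a := Nat.sqrt_le' _
      nlinarith [hm, hsq]
  have hmem : sigmaN a ∈ {s : ℕ | 0 < s ∧ ∃ t : ℕ, 0 < t ∧ s^2 * a < t^2 ∧ t^2 < s^2 * (a+1)} :=
    Nat.sInf_mem hne
  set s := sigmaN a with hsdef
  obtain ⟨hs0, t₀, ht₀0, ht₀1, ht₀2⟩ := hmem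
  have hs2 : 2 ≤ s := by
    by_contra h
    push_neg at h
    have hs1 : s = 1 := by omega
    simp only [hs1, one_pow, one_mul] at ht₀1 ht₀2
    omega
  -- key: no two distinct elements in the tau set
  have key : ∀ t u : ℕ, (0 < t ∧ s^2 * a < t^2 ∧ t^2 < s^2 * (a+1)) →
      (0 < u ∧ s^2 * a < u^2 ∧ u^2 < s^2 * (a+1)) → t < u → False := by
    rintro t u ⟨ht0, ht1, ht2⟩ ⟨hu0, hu1, hu2⟩ htu
    have hsucc : (t+1)^2 < s^2 * (a+1) := by
      calc (t+1)^2 ≤ u^2 := Nat.pow_le_pow_left (by omega) 2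
        _ < s^2 * (a+1) := hu2
    -- t > s*k
    have htk : s*k < t := by
      by_contra h
      push_neg at h
      have h1 : t^2 ≤ (s*k)^2 := Nat.pow_le_pow_left h 2
      have h2 : (s*k)^2 ≤ s^2*a := by
        calc (s*k)^2 = s^2*k^2 := by ring
          _ ≤ s^2*a := Nat.mul_le_mul le_rfl hka
      omega
    -- t+1 < s*(k+1)
    have htk' : t+1 < s*(k+1) := by
      by_contra h
      push_neg at h
      have h1 : (s*(k+1))^2 ≤ (t+1)^2 := Nat.pow_le_pow_left h 2
      have h2 : s^2*(a+1) ≤ (s*(k+1))^2 := by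
        calc s^2*(a+1) ≤ s^2*(k+1)^2 := Nat.mul_le_mul le_rfl (by omega : a+1 ≤ (k+1)^2)
          _ = (s*(k+1))^2 := by ring
      omega
    have htgk : k < t := by
      have h1 : k ≤ s*k := Nat.le_mul_of_pos_left k hs0
      omega
    -- show s-1 is in the set, contradicting minimality
    have hg1 : ((s-1:ℕ):ℤ) = (s:ℤ) - 1 := by push_cast [Nat.cast_sub (by omega : 1 ≤ s)]; ring
    have hg2 : ((t-k:ℕ):ℤ) = (t:ℤ) - (k:ℤ) := by
      push_cast [Nat.cast_sub htgk.le]; ring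
    have hmem' : (s-1) ∈ {s : ℕ | 0 < s ∧ ∃ t : ℕ, 0 < t ∧ s^2 * a < t^2 ∧ t^2 < s^2 * (a+1)} := by
      refine ⟨by omega, t - k, by omega, ?_, ?_⟩
      · have hz : ((s:ℤ)-1)^2*(a:ℤ) < ((t:ℤ)-(k:ℤ))^2 :=
          aux1' (s:ℤ) (t:ℤ) (k:ℤ) (a:ℤ) (by exact_mod_cast hs2) (by exact_mod_cast hk1)
            (by exact_mod_cast htk) (by exact_mod_cast ht1)
        have : ((s-1:ℕ):ℤ)^2 * (a:ℤ) < ((t-k:ℕ):ℤ)^2 := by rw [hg1, hg2]; exact hz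
        exact_mod_cast this
      · have hz : ((t:ℤ)-(k:ℤ))^2 < ((s:ℤ)-1)^2*((a:ℤ)+1) :=
          aux2' (s:ℤ) (t:ℤ) (k:ℤ) (a:ℤ) (by exact_mod_cast hs2) (by exact_mod_cast hk1)
            (by exact_mod_cast htgk.le) (by exact_mod_cast htk') (by exact_mod_cast hsucc)
        have : ((t-k:ℕ):ℤ)^2 < ((s-1:ℕ):ℤ)^2 * ((a:ℤ)+1) := by rw [hg1, hg2]; exact hz
        exact_mod_cast this
    have hle : sigmaN a ≤ s - 1 := Nat.sInf_le hmem'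
    rw [← hsdef] at hle
    omega
  -- conclude: the set is exactly {t₀}
  have hset : {t : ℕ | 0 < t ∧ s^2 * a < t^2 ∧ t^2 < s^2 * (a+1)} = {t₀} := by
    apply Set.eq_singleton_iff_unique_mem.mpr
    refine ⟨⟨ht₀0, ht₀1, ht₀2⟩, ?_⟩
    rintro u hu
    rcases lt_trichotomy u t₀ with h | h | h
    · exact absurd (key u t₀ hu ⟨ht₀0, ht₀1, ht₀2⟩ h) (by simp)
    · exact h
    · exact absurd (key t₀ u ⟨ht₀0, ht₀1, ht₀2⟩ hu h) (by simp)
  unfold tauN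
  rw [hset]
  exact Set.ncard_singleton t₀
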